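/- The square of functors commutes (up to natural isomorphism): starting from Ord, the composite of the forgetful functor Ord → Fin followed by adding a disjoint basepoint (−)₊ : Fin → Fin_*, is naturally isomorphic to the composite of [-] : Ord → Δ^op followed by the functor Δ^op → Fin_* given by [n] ↦ Hom_Δ([1],[n]) / ∂, i.e., the pointed set of monotone maps [1] → [n] with the constant maps collapsed to the basepoint. -/
import Mathlib


/-!
STATEMENT 3: The square commutes up to natural isomorphism: the composite of
the forgetful functor `Ord → Fin` with adding a disjoint basepoint
`(−)₊ : Fin → Fin⋆` is naturally isomorphic to the composite of
`[-] : Ord → Δᵒᵖ` with the functor `Δ¹/∂Δ¹ : Δᵒᵖ → Fin⋆` sending `[n]` to the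
pointed set of 1-simplices of the simplicial 1-simplex at level `n`, i.e.
`Hom_Δ([n],[1])` (monotone maps `[n] → {0 < 1}`) with all constant
(degenerate) maps collapsed to the basepoint, acting on morphisms by
precomposition.  Skeletally, a finite ordinal with `m` elements is `Fin m`,
`I₊` is `Option (Fin m)`, and `[I] = Fin (m+1)`.
-/

/-- The map `[φ] : [J] → [I]` in `Δ` induced by a monotone map `φ : I → J`. -/
def bracketMap {m n : ℕ} (φ : Fin m →o Fin n) : Fin (n + 1) →o Fin (m + 1) where
  toFun j :=
    ⟨(Finset.univ.filter fun i : Fin m => (φ i : ℕ) + 1 ≤ (j : ℕ)).card, by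
      have h := Finset.card_filter_le (Finset.univ : Finset (Fin m))
        (fun i : Fin m => (φ i : ℕ) + 1 ≤ (j : ℕ))
      simp only [Finset.card_univ, Fintype.card_fin] at h
      omega⟩
  monotone' := by
    intro a b hab
    apply Fin.mk_le_mk.mpr
    apply Finset.card_le_card
    intro x hx
    simp only [Finset.mem_filter, Finset.mem_univ, true_and] at hx ⊢
    have hab' : (a : ℕ) ≤ (b : ℕ) := hab
    omega

/-- A monotone map `[m] → [1]` is constant. -/
def IsConstMap {m : ℕ} (g : Fin (m + 1) →o Fin 2) : Prop := ∀ a b, g a = g b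

/-- The setoid on `Hom_Δ([m],[1])` collapsing all constant (degenerate)
1-simplices to a single point. -/
def constSetoid (m : ℕ) : Setoid (Fin (m + 1) →o Fin 2) where
  r g h := g = h ∨ (IsConstMap g ∧ IsConstMap h)
  iseqv := by
    constructor
    · intro g; exact Or.inl rfl
    · rintro g h (rfl | ⟨h1, h2⟩)
      · exact Or.inl rfl
      · exact Or.inr ⟨h2, h1⟩
    · rintro g h k (rfl | ⟨h1, h2⟩) (rfl | ⟨h3, h4⟩)
      · exact Or.inl rfl
      · exact Or.inr ⟨h3, h4⟩
      · exact Or.inr ⟨h1, h2⟩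
      · exact Or.inr ⟨h1, h4⟩



/-- The nonconstant monotone map `[m] → [1]` with threshold `i+1`. -/
def thr {m : ℕ} (i : Fin m) : Fin (m + 1) →o Fin 2 where
  toFun x := if (i : ℕ) < (x : ℕ) then 1 else 0
  monotone' := by
    intro a b hab
    dsimp only
    split_ifs with h1 h2
    · exact le_refl _
    · exact absurd (lt_of_lt_of_le h1 hab) h2
    · exact Fin.zero_le _
    · exact le_refl _

lemma thr_apply {m : ℕ} (i : Fin m) (x : Fin (m + 1)) :
    thr i x = if (i : ℕ) < (x : ℕ) then 1 else 0 := rfl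

lemma thr_nonconst {m : ℕ} (i : Fin m) : ¬ IsConstMap (thr i) := by
  intro h
  have h0 := h ⟨0, by omega⟩ ⟨(i : ℕ) + 1, by omega⟩
  simp [thr_apply] at h0

lemma fin2_eq_one_of_ne_zero (a : Fin 2) (h : a ≠ 0) : a = 1 := by
  have := a.isLt; ext; omega

lemma fin2_eq_zero_of_ne_one (a : Fin 2) (h : a ≠ 1) : a = 0 := by
  have := a.isLt
  ext
  have : (a : ℕ) ≠ 1 := fun hc => h (by ext; exact hc)
  omega

lemma thr_inj {m : ℕ} {i j : Fin m} (h : thr i = thr j) : i = j := by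
  have key : ∀ p q : Fin m, thr p = thr q → (q : ℕ) ≤ (p : ℕ) := by
    intro p q hpq
    have this : thr p ⟨(p : ℕ) + 1, by omega⟩ = thr q ⟨(p : ℕ) + 1, by omega⟩ := by
      rw [hpq]
    simp only [thr_apply, Fin.val_mk] at this
    by_contra hc
    push_neg at hc
    rw [if_pos (by omega), if_neg (by omega)] at this
    exact absurd this (by decide)
  have h1 := key i j h
  have h2 := key j i h.symm
  ext; omega

lemma exists_thr {m : ℕ} (g : Fin (m + 1) →o Fin 2) (h : ¬ IsConstMap g) :
    ∃ i : Fin m, g = thr i := by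
  have hne : (Finset.univ.filter fun x : Fin (m+1) => g x = 1).Nonempty := by
    by_contra hc
    apply h
    intro a b
    have hz : ∀ x, g x = 0 := by
      intro x
      by_contra hx
      exact hc ⟨x, Finset.mem_filter.mpr ⟨Finset.mem_univ _,
        fin2_eq_one_of_ne_zero _ hx⟩⟩
    rw [hz a, hz b]
  set x₀ := (Finset.univ.filter fun x : Fin (m+1) => g x = 1).min' hne with hx₀
  have hgx₀ : g x₀ = 1 := by
    have := (Finset.univ.filter fun x : Fin (m+1) => g x = 1).min'_mem hne
    rw [← hx₀] at this
    exact (Finset.mem_filter.mp this).2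
  have hmin : ∀ y, g y = 1 → x₀ ≤ y := by
    intro y hy
    exact Finset.min'_le _ y (Finset.mem_filter.mpr ⟨Finset.mem_univ _, hy⟩)
  have hx₀pos : 1 ≤ (x₀ : ℕ) := by
    by_contra hc
    apply h
    intro a b
    have hall : ∀ y : Fin (m+1), g y = 1 := by
      intro y
      have hle : x₀ ≤ y := by
        apply Fin.le_def.mpr; omega
      have := g.monotone hle
      rw [hgx₀] at this
      exact le_antisymm (by have := (g y).isLt; exact Fin.le_def.mpr (by omega)) this
    rw [hall a, hall b]
  have hx₀lt : (x₀ : ℕ) < m + 1 := x₀.isLt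
  refine ⟨⟨(x₀ : ℕ) - 1, by omega⟩, ?_⟩
  ext x
  rw [thr_apply]
  split_ifs with hlt
  · simp only [Fin.val_mk] at hlt
    have hle : x₀ ≤ x := Fin.le_def.mpr (by omega)
    have := g.monotone hle
    rw [hgx₀] at this
    have h2 := (g x).isLt
    have := Fin.le_def.mp this
    omega
  · have hne1 : g x ≠ 1 := by
      intro hc
      have := Fin.le_def.mp (hmin x hc)
      simp only [Fin.val_mk] at hlt
      omega
    rw [fin2_eq_zero_of_ne_one _ hne1]

lemma thr_comp {a b : ℕ} (φ : Fin a →o Fin b) (i : Fin a) :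
    (thr i).comp (bracketMap φ) = thr (φ i) := by
  apply OrderHom.ext
  funext j
  show thr i (bracketMap φ j) = thr (φ i) j
  rw [thr_apply, thr_apply]
  have hcard : ((i : ℕ) < ((bracketMap φ j : Fin (a+1)) : ℕ)) ↔ ((φ i : ℕ) < (j : ℕ)) := by
    show ((i : ℕ) <
      (Finset.univ.filter fun k : Fin a => (φ k : ℕ) + 1 ≤ (j : ℕ)).card) ↔ _
    constructor
    · intro hlt
      by_contra hc
      push_neg at hc
      have hsub : (Finset.univ.filter fun k : Fin a => (φ k : ℕ) + 1 ≤ (j : ℕ))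
          ⊆ Finset.Iio i := by
        intro k hk
        simp only [Finset.mem_filter, Finset.mem_univ, true_and] at hk
        rw [Finset.mem_Iio]
        by_contra hki
        push_neg at hki
        have := Fin.le_def.mp (φ.monotone hki)
        omega
      have := Finset.card_le_card hsub
      rw [Fin.card_Iio] at this
      omega
    · intro hlt
      have hsub : Finset.Iic i ⊆
          (Finset.univ.filter fun k : Fin a => (φ k : ℕ) + 1 ≤ (j : ℕ)) := by
        intro k hk
        rw [Finset.mem_Iic] at hk
        simp only [Finset.mem_filter, Finset.mem_univ, true_and]
        have := Fin.le_def.mp (φ.monotone hk)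
        omega
      have := Finset.card_le_card hsub
      rw [Fin.card_Iic] at this
      omega
  by_cases hc : (φ i : ℕ) < (j : ℕ)
  · rw [if_pos (hcard.mpr hc), if_pos hc]
  · rw [if_neg (fun h => hc (hcard.mp h)), if_neg hc]

lemma isConst_comp {a b : ℕ} (g : Fin (a + 1) →o Fin 2)
    (f : Fin (b + 1) →o Fin (a + 1)) (h : IsConstMap g) :
    IsConstMap (g.comp f) := fun x y => h (f x) (f y)

/-- The underlying map of the bijection. -/
def betaFun (m : ℕ) : Option (Fin m) → Quotient (constSetoid m)
  | none => Quotient.mk (constSetoid m) ⟨fun _ => 0, monotone_const⟩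
  | some i => Quotient.mk (constSetoid m) (thr i)

lemma const_zero_isConst (m : ℕ) :
    IsConstMap (⟨fun _ => 0, monotone_const⟩ : Fin (m + 1) →o Fin 2) :=
  fun _ _ => rfl

lemma betaFun_bij (m : ℕ) : Function.Bijective (betaFun m) := by
  constructor
  · intro x y hxy
    match x, y with
    | none, none => rfl
    | none, some j =>
      rcases Quotient.exact hxy with h | ⟨_, h2⟩
      · exact absurd (h ▸ const_zero_isConst m) (thr_nonconst j)
      · exact absurd h2 (thr_nonconst j)
    | some i, none =>
      rcases Quotient.exact hxy with h | ⟨h1, _⟩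
      · exact absurd (h ▸ const_zero_isConst m) (thr_nonconst i)
      · exact absurd h1 (thr_nonconst i)
    | some i, some j =>
      rcases Quotient.exact hxy with h | ⟨h1, _⟩
      · exact congrArg some (thr_inj h)
      · exact absurd h1 (thr_nonconst i)
  · intro q
    induction q using Quotient.ind with
    | _ g =>
      by_cases h : IsConstMap g
      · exact ⟨none, Quotient.sound (Or.inr ⟨const_zero_isConst m, h⟩)⟩
      · obtain ⟨i, hi⟩ := exists_thr g h
        exact ⟨some i, by rw [hi]; rfl⟩
/-- The square `Ord → Fin → Fin⋆` versus `Ord → Δᵒᵖ → Fin⋆` commutes up to a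
natural isomorphism `β`: for each finite ordinal `I` (with `m` elements) a
pointed bijection `I₊ ≅ Hom_Δ([I],[1])/∂`, natural with respect to every
monotone map `φ : I → J` (the right-hand functor acting by precomposition
with `[φ]`). -/
theorem ord_fin_delta_square_commutes :
    ∃ β : ∀ m : ℕ, Option (Fin m) ≃ Quotient (constSetoid m),
      (∀ m : ℕ, β m none =
        Quotient.mk (constSetoid m) ⟨fun _ => 0, monotone_const⟩) ∧
      (∀ (a b : ℕ) (φ : Fin a →o Fin b) (x : Option (Fin a)) (g : Fin (a + 1) →o Fin 2),
        β a x = Quotient.mk (constSetoid a) g →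
          β b (Option.map φ x) = Quotient.mk (constSetoid b) (g.comp (bracketMap φ))) := by
  refine ⟨fun m => Equiv.ofBijective (betaFun m) (betaFun_bij m), fun m => rfl, ?_⟩
  intro a b φ x g hx
  match x with
  | none =>
    have hrel := Quotient.exact (hx : betaFun a none = _)
    have hg : IsConstMap g := by
      rcases hrel with h | ⟨_, h2⟩
      · exact h ▸ const_zero_isConst a
      · exact h2
    exact Quotient.sound (Or.inr ⟨const_zero_isConst b,
      isConst_comp g (bracketMap φ) hg⟩)
  | some i =>
    have hrel := Quotient.exact (hx : betaFun a (some i) = _)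
    have hg : g = thr i := by
      rcases hrel with h | ⟨h1, _⟩
      · exact h.symm
      · exact absurd h1 (thr_nonconst i)
    show betaFun b (some (φ i)) = _
    rw [hg]
    show Quotient.mk (constSetoid b) (thr (φ i)) = _
    rw [thr_comp]
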